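/- Let h : (0,∞) → ℝ be positive, strictly increasing and bounded, and let f₁, f₂ : (0,∞) → ℝ be measurable, non-negative, locally integrable functions with ∫_0^∞ f₁(y) dy = ∫_0^∞ f₂(y) dy = ∞. Define I(f) = ∫_0^∞ h(x) f(x) exp(−∫_0^x f(y) dy) dx. If f₁(x) ≤ f₂(x) for almost every x > 0 and ∫_0^x f₁(y) dy < ∫_0^x f₂(y) dy for every x > 0, then I(f₁) > I(f₂). -/

import Mathlib

open Set Filter MeasureTheory
open scoped Topology ENNReal

namespace Stmt12

noncomputable def Fi (f : ℝ → ℝ) (x : ℝ) : ℝ := ∫ y in Set.Ioo 0 x, f y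

variable {f : ℝ → ℝ}

lemma Fi_nonneg (h0 : ∀ x, 0 < x → 0 ≤ f x) (x : ℝ) : 0 ≤ Fi f x :=
  setIntegral_nonneg measurableSet_Ioo fun y hy => h0 y hy.1

lemma Fi_zero : Fi f 0 = 0 := by simp [Fi]

lemma Fi_mono (h0 : ∀ x, 0 < x → 0 ≤ f x)
    (hloc : ∀ x, 0 < x → IntegrableOn f (Set.Ioo 0 x)) : Monotone (Fi f) := by
  intro x x' hxx'
  rcases le_or_gt x' 0 with hx' | hx'
  · unfold Fi
    rw [Set.Ioo_eq_empty (by simp only [not_lt]; linarith),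
      Set.Ioo_eq_empty (by simp only [not_lt]; linarith)]
  · exact setIntegral_mono_set (hloc x' hx')
      ((ae_restrict_iff' measurableSet_Ioo).2 (ae_of_all _ fun y hy => h0 y hy.1))
      ((Set.Ioo_subset_Ioo_right hxx').eventuallyLE)

lemma Fi_eq_Ioc (x : ℝ) : Fi f x = ∫ y in Set.Ioc 0 x, f y :=
  (integral_Ioc_eq_integral_Ioo).symm

lemma Fi_contOn (hloc : ∀ x, 0 < x → IntegrableOn f (Set.Ioo 0 x)) :
    ContinuousOn (Fi f) (Set.Ici 0) := by
  intro x hx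
  have hx0 : (0:ℝ) ≤ x := hx
  have hb : (0:ℝ) < x + 1 := by linarith
  have hint : IntegrableOn f (Set.Icc 0 (x + 1)) :=
    (hloc (x + 1) hb).congr_set_ae (Ioo_ae_eq_Icc).symm
  have h1 : ContinuousOn (fun x => ∫ t in Set.Ioc 0 x, f t) (Set.Icc 0 (x + 1)) :=
    intervalIntegral.continuousOn_primitive hint
  have h2 : ContinuousWithinAt (Fi f) (Set.Icc 0 (x + 1)) x := by
    have h3 := h1 x ⟨hx0, by linarith⟩
    exact h3.congr (fun y _ => Fi_eq_Ioc y) (Fi_eq_Ioc x)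
  refine h2.mono_of_mem_nhdsWithin ?_
  rw [mem_nhdsWithin_iff_exists_mem_nhds_inter]
  exact ⟨Set.Iio (x + 1), Iio_mem_nhds (by linarith),
    fun y hy => ⟨hy.2, le_of_lt hy.1⟩⟩

lemma Fi_add (h0 : ∀ x, 0 < x → 0 ≤ f x)
    (hloc : ∀ x, 0 < x → IntegrableOn f (Set.Ioo 0 x)) {a b : ℝ} (ha : 0 ≤ a) (hab : a ≤ b) :
    Fi f b = Fi f a + ∫ y in Set.Ioo a b, f y := by
  rcases eq_or_lt_of_le ha with rfl | ha'
  · rw [Fi_zero, zero_add]; rfl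
  · have hb : 0 < b := lt_of_lt_of_le ha' hab
    have hu : Set.Ioo 0 a ∪ Set.Ico a b = Set.Ioo 0 b := Set.Ioo_union_Ico_eq_Ioo ha' hab
    have hint1 : IntegrableOn f (Set.Ioo 0 a) := hloc a ha'
    have hint2 : IntegrableOn f (Set.Ico a b) :=
      (hloc b hb).mono_set fun y hy => ⟨lt_of_lt_of_le ha' hy.1, hy.2⟩
    have hdisj : Disjoint (Set.Ioo 0 a) (Set.Ico a b) :=
      Set.disjoint_left.2 fun x hx hx' => absurd hx.2 (not_lt.2 hx'.1)
    have h := setIntegral_union hdisj measurableSet_Ico hint1 hint2 (f := f) (μ := volume)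
    show (∫ y in Set.Ioo 0 b, f y) = _
    rw [← hu, h, integral_Ico_eq_integral_Ioo]
    rfl

lemma lint_exp (c : ℝ) :
    ∫⁻ s in Set.Ioi c, ENNReal.ofReal (Real.exp (-s)) = ENNReal.ofReal (Real.exp (-c)) := by
  rw [← ofReal_integral_eq_lintegral_ofReal]
  · rw [integral_exp_neg_Ioi]
  · exact (by simpa using exp_neg_integrableOn_Ioi c one_pos :
      IntegrableOn (fun s : ℝ => Real.exp (-s)) (Set.Ioi c))
  · exact ae_of_all _ fun x => (Real.exp_pos _).le

lemma int_weight (c : ℝ) :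
    IntegrableOn (fun s => Real.exp (-s) * (s - c)) (Set.Ioi c) ∧
      (∫ s in Set.Ioi c, Real.exp (-s) * (s - c)) = Real.exp (-c) := by
  have hderiv : ∀ s ∈ Set.Ioi c, HasDerivAt (fun s => -(Real.exp (-s) * (s - c + 1)))
      (Real.exp (-s) * (s - c)) s := by
    intro s _
    have h1 : HasDerivAt (fun s : ℝ => Real.exp (-s)) (-Real.exp (-s)) s := by
      convert (hasDerivAt_neg s).exp using 1; ring
    have h2 : HasDerivAt (fun s : ℝ => s - c + 1) 1 s := by
      simpa using ((hasDerivAt_id s).sub_const c).add_const 1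
    have h3 := (h1.mul h2).neg
    exact h3.congr_deriv (by ring)
  have hcont : ContinuousWithinAt (fun s => -(Real.exp (-s) * (s - c + 1))) (Set.Ici c) c := by
    apply Continuous.continuousWithinAt
    fun_prop
  have hpos : ∀ s ∈ Set.Ioi c, 0 ≤ Real.exp (-s) * (s - c) := fun s hs =>
    mul_nonneg (Real.exp_pos _).le (by have : c < s := hs; linarith)
  have htend : Tendsto (fun s => -(Real.exp (-s) * (s - c + 1))) atTop (𝓝 0) := by
    have h1 := Real.tendsto_pow_mul_exp_neg_atTop_nhds_zero 1
    have h2 : Tendsto (fun x : ℝ => Real.exp (-x)) atTop (𝓝 0) :=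
      Real.tendsto_exp_neg_atTop_nhds_zero
    have h3 := (h1.add (h2.const_mul (1 - c))).neg
    have h4 : -((0:ℝ) + (1 - c) * 0) = 0 := by ring
    rw [h4] at h3
    refine h3.congr fun x => ?_
    ring
  refine ⟨integrableOn_Ioi_deriv_of_nonneg hcont hderiv hpos htend, ?_⟩
  rw [integral_Ioi_of_hasDerivAt_of_nonneg hcont hderiv hpos htend]
  ring

lemma key (hmeas : Measurable f) (h0 : ∀ x, 0 < x → 0 ≤ f x)
    (hloc : ∀ x, 0 < x → IntegrableOn f (Set.Ioo 0 x))
    (hdiv : Tendsto (Fi f) atTop atTop) {a : ℝ} (ha : 0 ≤ a) :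
    ∫⁻ x in Set.Ioi a, ENNReal.ofReal (f x * Real.exp (-Fi f x))
      = ENNReal.ofReal (Real.exp (-Fi f a)) := by
  classical
  have hFmono := Fi_mono h0 hloc
  have hFmeas : Measurable (Fi f) := hFmono.measurable
  set k : ℝ → ℝ → ℝ≥0∞ := fun x s =>
    if Fi f x < s then ENNReal.ofReal (f x) * ENNReal.ofReal (Real.exp (-s)) else 0 with hk
  have hstep1 : ∀ᵐ x ∂(volume.restrict (Set.Ioi a)),
      ENNReal.ofReal (f x * Real.exp (-Fi f x)) = ∫⁻ s, k x s := by
    rw [ae_restrict_iff' measurableSet_Ioi]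
    refine ae_of_all _ fun x hx => ?_
    have hfx : 0 ≤ f x := h0 x (lt_of_le_of_lt ha hx)
    have h1 : ∫⁻ s, k x s
        = ∫⁻ s in Set.Ioi (Fi f x), ENNReal.ofReal (f x) * ENNReal.ofReal (Real.exp (-s)) := by
      rw [← lintegral_indicator measurableSet_Ioi]
      refine lintegral_congr fun s => ?_
      by_cases hs : Fi f x < s <;> simp [hk, Set.indicator, hs, Set.mem_Ioi]
    rw [h1, lintegral_const_mul' _ _ ENNReal.ofReal_ne_top, lint_exp,
      ENNReal.ofReal_mul hfx]
  rw [lintegral_congr_ae hstep1]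
  have hkmeas : AEMeasurable (Function.uncurry k) ((volume.restrict (Set.Ioi a)).prod volume) := by
    apply Measurable.aemeasurable
    have hset : MeasurableSet {p : ℝ × ℝ | Fi f p.1 < p.2} :=
      measurableSet_lt (hFmeas.comp measurable_fst) measurable_snd
    exact Measurable.ite hset
      ((ENNReal.measurable_ofReal.comp (hmeas.comp measurable_fst)).mul
        (ENNReal.measurable_ofReal.comp (Real.measurable_exp.comp measurable_snd.neg)))
      measurable_const
  rw [lintegral_lintegral_swap hkmeas]
  have hinner : ∀ s : ℝ, ∫⁻ x in Set.Ioi a, k x s =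
      (Set.Ioi (Fi f a)).indicator
        (fun s => ENNReal.ofReal (Real.exp (-s) * (s - Fi f a))) s := by
    intro s
    by_cases hs : Fi f a < s
    · set T := {x : ℝ | s ≤ Fi f x} with hT
      have hTne : T.Nonempty := (hdiv.eventually_ge_atTop s).exists
      have hTlb : ∀ x ∈ T, a ≤ x := by
        intro x hx
        by_contra hxa
        exact absurd (le_trans hx (hFmono (le_of_not_ge hxa))) (not_le.2 hs)
      have hTbd : BddBelow T := ⟨a, hTlb⟩
      set c := sInf T with hc
      have hac : a ≤ c := le_csInf hTne hTlb
      have h0c : 0 ≤ c := le_trans ha hac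
      have hcge : s ≤ Fi f c := by
        by_contra hlt'
        push_neg at hlt'
        have hcw : ContinuousWithinAt (Fi f) (Set.Ici 0) c := Fi_contOn hloc c h0c
        have hev : ∀ᶠ x in nhdsWithin c (Set.Ici 0), Fi f x < s :=
          hcw.eventually (eventually_of_mem (Iio_mem_nhds hlt') fun y hy => hy)
        have hev2 : ∀ᶠ x in nhdsWithin c (Set.Ici c), Fi f x < s :=
          hev.filter_mono (nhdsWithin_mono c (Set.Ici_subset_Ici.2 h0c))
        obtain ⟨u, hu, hsub⟩ := mem_nhdsGE_iff_exists_Ico_subset.1 hev2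
        obtain ⟨x, hxT, hxu⟩ := exists_lt_of_csInf_lt hTne hu.out
        have hFx : Fi f x < s := hsub ⟨csInf_le hTbd hxT, hxu⟩
        exact absurd hFx (not_lt.2 hxT)
      have hac' : a < c := by
        rcases eq_or_lt_of_le hac with rfl | hlt''
        · exact absurd hcge (not_le.2 hs)
        · exact hlt''
      have hc0 : 0 < c := lt_of_le_of_lt ha hac'
      have hcle : Fi f c ≤ s := by
        by_contra hlt'
        push_neg at hlt'
        have hcont : ContinuousAt (Fi f) c :=
          (Fi_contOn hloc).continuousAt
            (mem_of_superset (Ioi_mem_nhds hc0) Set.Ioi_subset_Ici_self)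
        have hev : ∀ᶠ x in nhds c, s < Fi f x :=
          hcont.eventually (eventually_of_mem (Ioi_mem_nhds hlt') fun y hy => hy)
        have hev2 : ∀ᶠ x in nhdsWithin c (Set.Iio c), s < Fi f x :=
          hev.filter_mono nhdsWithin_le_nhds
        obtain ⟨x, hx1, hx2⟩ := (hev2.and eventually_mem_nhdsWithin).exists
        exact absurd (csInf_le hTbd (le_of_lt hx1)) (not_le.2 hx2)
      have hFc : Fi f c = s := le_antisymm hcle hcge
      have hset2 : {x : ℝ | Fi f x < s} ∩ Set.Ioi a = Set.Ioo a c := by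
        ext x
        simp only [Set.mem_inter_iff, Set.mem_Ioi, Set.mem_setOf_eq, Set.mem_Ioo]
        constructor
        · rintro ⟨hxs, hxa⟩
          refine ⟨hxa, ?_⟩
          by_contra hxc
          have h5 : s ≤ Fi f x := hFc ▸ hFmono (not_lt.1 hxc)
          exact absurd h5 (not_le.2 hxs)
        · rintro ⟨hxa, hxc⟩
          refine ⟨?_, hxa⟩
          by_contra hxs
          exact absurd (csInf_le hTbd (not_lt.1 hxs)) (not_le.2 hxc)
      have hIoo : IntegrableOn f (Set.Ioo a c) :=
        (hloc c hc0).mono_set fun y hy => ⟨lt_of_le_of_lt ha hy.1, hy.2⟩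
      have hIoonn : 0 ≤ᵐ[volume.restrict (Set.Ioo a c)] f :=
        (ae_restrict_iff' measurableSet_Ioo).2
          (ae_of_all _ fun y hy => h0 y (lt_of_le_of_lt ha hy.1))
      have hval : (∫ y in Set.Ioo a c, f y) = s - Fi f a := by
        have h6 := Fi_add h0 hloc ha (le_of_lt hac')
        rw [hFc] at h6; linarith
      have hmlt : MeasurableSet {x : ℝ | Fi f x < s} := measurableSet_lt hFmeas measurable_const
      calc ∫⁻ x in Set.Ioi a, k x s
          = ∫⁻ x in Set.Ioi a, ({x : ℝ | Fi f x < s}).indicator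
              (fun x => ENNReal.ofReal (f x) * ENNReal.ofReal (Real.exp (-s))) x := by
            refine lintegral_congr fun x => ?_
            by_cases hx : Fi f x < s
            · rw [Set.indicator_of_mem (show x ∈ {x : ℝ | Fi f x < s} from hx)]
              simp [hk, hx]
            · rw [Set.indicator_of_notMem (show x ∉ {x : ℝ | Fi f x < s} from hx)]
              simp [hk, hx]
        _ = ∫⁻ x in {x : ℝ | Fi f x < s} ∩ Set.Ioi a,
              ENNReal.ofReal (f x) * ENNReal.ofReal (Real.exp (-s)) := by
            rw [lintegral_indicator hmlt, Measure.restrict_restrict hmlt]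
        _ = ∫⁻ x in Set.Ioo a c, ENNReal.ofReal (f x) * ENNReal.ofReal (Real.exp (-s)) := by
            rw [hset2]
        _ = (∫⁻ x in Set.Ioo a c, ENNReal.ofReal (f x)) * ENNReal.ofReal (Real.exp (-s)) :=
            lintegral_mul_const' _ _ ENNReal.ofReal_ne_top
        _ = ENNReal.ofReal (s - Fi f a) * ENNReal.ofReal (Real.exp (-s)) := by
            rw [← ofReal_integral_eq_lintegral_ofReal hIoo hIoonn, hval]
        _ = (Set.Ioi (Fi f a)).indicator
              (fun s => ENNReal.ofReal (Real.exp (-s) * (s - Fi f a))) s := by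
            rw [Set.indicator_of_mem (Set.mem_Ioi.2 hs),
              ENNReal.ofReal_mul (Real.exp_pos _).le, mul_comm]
    · have hz : ∀ x, x ∈ Set.Ioi a → k x s = 0 := by
        intro x hx
        have h7 : ¬ Fi f x < s := not_lt.2 (le_trans (not_lt.1 hs) (hFmono (le_of_lt hx)))
        simp [hk, h7]
      rw [setLIntegral_congr_fun measurableSet_Ioi hz, lintegral_zero,
        Set.indicator_of_notMem (by simpa using hs)]
  rw [lintegral_congr hinner, lintegral_indicator measurableSet_Ioi,
    ← ofReal_integral_eq_lintegral_ofReal (int_weight (Fi f a)).1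
      ((ae_restrict_iff' measurableSet_Ioi).2 (ae_of_all _ fun s hs =>
        mul_nonneg (Real.exp_pos _).le (by have : Fi f a < s := hs; linarith))),
    (int_weight (Fi f a)).2]

end Stmt12

open Stmt12 in
/-- Let `h` be positive, strictly increasing and bounded on `(0,∞)` and
let `f₁, f₂` be measurable, non-negative, locally integrable on `(0,∞)` with divergent
integral `∫_0^∞ fᵢ = ∞`. If `f₁ ≤ f₂` a.e. on `(0,∞)` and `∫_0^x f₁ < ∫_0^x f₂` for every
`x > 0`, then `I(f₁) > I(f₂)` where `I(f) = ∫_0^∞ h(x) f(x) exp(-∫_0^x f) dx`. -/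
theorem functional_I_strict_antitone
    (h f₁ f₂ : ℝ → ℝ)
    (hh_pos : ∀ x, 0 < x → 0 < h x)
    (hh_mono : StrictMonoOn h (Set.Ioi 0))
    (hh_bdd : ∃ M, ∀ x, 0 < x → h x ≤ M)
    (hf₁_meas : Measurable f₁)
    (hf₂_meas : Measurable f₂)
    (hf₁_nonneg : ∀ x, 0 < x → 0 ≤ f₁ x)
    (hf₂_nonneg : ∀ x, 0 < x → 0 ≤ f₂ x)
    (hf₁_loc : ∀ x, 0 < x → IntegrableOn f₁ (Set.Ioo 0 x))
    (hf₂_loc : ∀ x, 0 < x → IntegrableOn f₂ (Set.Ioo 0 x))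
    (hf₁_div : Tendsto (fun x => ∫ y in Set.Ioo 0 x, f₁ y) atTop atTop)
    (hf₂_div : Tendsto (fun x => ∫ y in Set.Ioo 0 x, f₂ y) atTop atTop)
    (hle : ∀ᵐ x ∂(volume : Measure ℝ), 0 < x → f₁ x ≤ f₂ x)
    (hlt : ∀ x, 0 < x → (∫ y in Set.Ioo 0 x, f₁ y) < ∫ y in Set.Ioo 0 x, f₂ y) :
    ∫ x in Set.Ioi 0, h x * f₂ x * Real.exp (-(∫ y in Set.Ioo 0 x, f₂ y)) <
      ∫ x in Set.Ioi 0, h x * f₁ x * Real.exp (-(∫ y in Set.Ioo 0 x, f₁ y)) := by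
  classical
  obtain ⟨M, hM⟩ := hh_bdd
  -- a monotone measurable extension of h
  set hm : ℝ → ℝ := fun x => sInf (h '' (Set.Ici x ∩ Set.Ioi 0)) with hhm
  have hne : ∀ x : ℝ, (h '' (Set.Ici x ∩ Set.Ioi 0)).Nonempty := fun x =>
    ⟨h (max x 1), ⟨max x 1, ⟨Set.mem_Ici.2 (le_max_left _ _), lt_of_lt_of_le one_pos (le_max_right x 1)⟩, rfl⟩⟩
  have hbdd : ∀ x : ℝ, BddBelow (h '' (Set.Ici x ∩ Set.Ioi 0)) := by
    intro x
    refine ⟨0, ?_⟩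
    rintro y ⟨z, ⟨_, hz⟩, rfl⟩
    exact (hh_pos z hz).le
  have hm_mono : Monotone hm := by
    intro x y hxy
    exact csInf_le_csInf (hbdd x) (hne y)
      (Set.image_mono (Set.inter_subset_inter_left _ (Set.Ici_subset_Ici.2 hxy)))
  have hm_eq : ∀ x, 0 < x → hm x = h x := by
    intro x hx
    refine le_antisymm (csInf_le (hbdd x) ⟨x, ⟨le_refl x, hx⟩, rfl⟩) ?_
    refine le_csInf (hne x) ?_
    rintro y ⟨z, ⟨hz1, hz2⟩, rfl⟩
    rcases eq_or_lt_of_le (Set.mem_Ici.1 hz1) with rfl | hlt'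
    · exact le_refl _
    · exact (hh_mono hx hz2 hlt').le
  have hm_meas : Measurable hm := hm_mono.measurable
  have hm_pos : ∀ x, 0 < x → 0 < hm x := by
    intro x hx; rw [hm_eq x hx]; exact hh_pos x hx
  have hm_le : ∀ x, 0 < x → hm x ≤ M := by
    intro x hx; rw [hm_eq x hx]; exact hM x hx
  have hM0 : 0 ≤ M := le_trans (hm_pos 1 one_pos).le (hm_le 1 one_pos)
  -- replace h by hm in the goal
  have hgoal_congr : ∀ f : ℝ → ℝ,
      (∫ x in Set.Ioi 0, h x * f x * Real.exp (-(∫ y in Set.Ioo 0 x, f y)))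
        = ∫ x in Set.Ioi 0, hm x * f x * Real.exp (-Fi f x) := by
    intro f
    refine setIntegral_congr_fun measurableSet_Ioi fun x hx => ?_
    rw [hm_eq x hx]
    rfl
  rw [hgoal_congr f₁, hgoal_congr f₂]
  -- lintegral version
  set J : (ℝ → ℝ) → ℝ≥0∞ := fun f =>
    ∫⁻ x in Set.Ioi 0, ENNReal.ofReal (hm x * f x * Real.exp (-Fi f x)) with hJ
  have hrepr : ∀ f : ℝ → ℝ, Measurable f → (∀ x, 0 < x → 0 ≤ f x) →
      (∀ x, 0 < x → IntegrableOn f (Set.Ioo 0 x)) →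
      (∫ x in Set.Ioi 0, hm x * f x * Real.exp (-Fi f x)) = (J f).toReal := by
    intro f hfm hfnn hfloc
    rw [MeasureTheory.integral_eq_lintegral_of_nonneg_ae]
    · exact (ae_restrict_iff' measurableSet_Ioi).2 (ae_of_all _ fun x hx =>
        mul_nonneg (mul_nonneg (hm_pos x hx).le (hfnn x hx)) (Real.exp_pos _).le)
    · exact ((hm_meas.mul hfm).mul
        (Real.measurable_exp.comp (Fi_mono hfnn hfloc).measurable.neg)).aestronglyMeasurable
  rw [hrepr f₁ hf₁_meas hf₁_nonneg hf₁_loc, hrepr f₂ hf₂_meas hf₂_nonneg hf₂_loc]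
  -- finiteness of J
  have hfin : ∀ f : ℝ → ℝ, Measurable f → (∀ x, 0 < x → 0 ≤ f x) →
      (∀ x, 0 < x → IntegrableOn f (Set.Ioo 0 x)) →
      Tendsto (Fi f) atTop atTop → J f ≤ ENNReal.ofReal M := by
    intro f hfm hfnn hfloc hfdiv
    have hb : ∀ x ∈ Set.Ioi 0, ENNReal.ofReal (hm x * f x * Real.exp (-Fi f x))
        ≤ ENNReal.ofReal M * ENNReal.ofReal (f x * Real.exp (-Fi f x)) := by
      intro x hx
      rw [← ENNReal.ofReal_mul hM0]
      apply ENNReal.ofReal_le_ofReal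
      have h1 : hm x * f x * Real.exp (-Fi f x) = hm x * (f x * Real.exp (-Fi f x)) := by ring
      rw [h1]
      exact mul_le_mul_of_nonneg_right (hm_le x hx)
        (mul_nonneg (hfnn x hx) (Real.exp_pos _).le)
    calc J f ≤ ∫⁻ x in Set.Ioi 0, ENNReal.ofReal M
            * ENNReal.ofReal (f x * Real.exp (-Fi f x)) := by
          refine setLIntegral_mono ?_ hb
          exact measurable_const.mul (ENNReal.measurable_ofReal.comp
            (hfm.mul (Real.measurable_exp.comp (Fi_mono hfnn hfloc).measurable.neg)))
      _ = ENNReal.ofReal M * ∫⁻ x in Set.Ioi 0, ENNReal.ofReal (f x * Real.exp (-Fi f x)) :=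
          lintegral_const_mul' _ _ ENNReal.ofReal_ne_top
      _ = ENNReal.ofReal M * ENNReal.ofReal (Real.exp (-Fi f 0)) := by
          rw [key hfm hfnn hfloc hfdiv le_rfl]
      _ ≤ ENNReal.ofReal M := by
          rw [Fi_zero]; simp
  have hfin₁ : J f₁ ≠ ⊤ :=
    (lt_of_le_of_lt (hfin f₁ hf₁_meas hf₁_nonneg hf₁_loc hf₁_div) ENNReal.ofReal_lt_top).ne
  have hfin₂ : J f₂ ≠ ⊤ :=
    (lt_of_le_of_lt (hfin f₂ hf₂_meas hf₂_nonneg hf₂_loc hf₂_div) ENNReal.ofReal_lt_top).ne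
  -- layer-cake decomposition
  set S : ℝ → Set ℝ := fun t => {x | 0 < x ∧ t < hm x} with hS
  set A : ℝ → ℝ := fun t => sInf (S t) with hA
  set inr : (ℝ → ℝ) → ℝ → ℝ≥0∞ := fun f t =>
    if 0 < t ∧ (S t).Nonempty then ENNReal.ofReal (Real.exp (-Fi f (A t))) else 0 with hinr
  have hlayer : ∀ f : ℝ → ℝ, Measurable f → (∀ x, 0 < x → 0 ≤ f x) →
      (∀ x, 0 < x → IntegrableOn f (Set.Ioo 0 x)) →
      Tendsto (Fi f) atTop atTop → J f = ∫⁻ t, inr f t := by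
    intro f hfm hfnn hfloc hfdiv
    set W : ℝ → ℝ≥0∞ := fun x => ENNReal.ofReal (f x * Real.exp (-Fi f x)) with hW
    have hWmeas : Measurable W := ENNReal.measurable_ofReal.comp
      (hfm.mul (Real.measurable_exp.comp (Fi_mono hfnn hfloc).measurable.neg))
    set g : ℝ → ℝ → ℝ≥0∞ := fun x t => if 0 < t ∧ t < hm x then W x else 0 with hg
    have hstep1 : ∀ᵐ x ∂(volume.restrict (Set.Ioi 0)),
        ENNReal.ofReal (hm x * f x * Real.exp (-Fi f x)) = ∫⁻ t, g x t := by
      rw [ae_restrict_iff' measurableSet_Ioi]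
      refine ae_of_all _ fun x hx => ?_
      have h1 : ∫⁻ t, g x t = ∫⁻ t, (Set.Ioo 0 (hm x)).indicator (fun _ => W x) t := by
        refine lintegral_congr fun t => ?_
        by_cases ht : 0 < t ∧ t < hm x
        · rw [Set.indicator_of_mem (Set.mem_Ioo.2 ht)]; simp [hg, ht]
        · rw [Set.indicator_of_notMem (by simpa [Set.mem_Ioo] using ht)]; simp [hg, ht]
      rw [h1, lintegral_indicator_const measurableSet_Ioo, Real.volume_Ioo, sub_zero,
        show hm x * f x * Real.exp (-Fi f x) = f x * Real.exp (-Fi f x) * hm x by ring,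
        ENNReal.ofReal_mul (mul_nonneg (hfnn x hx) (Real.exp_pos _).le)]
    simp only [hJ]
    rw [lintegral_congr_ae hstep1]
    have hgmeas : AEMeasurable (Function.uncurry g)
        ((volume.restrict (Set.Ioi 0)).prod volume) := by
      apply Measurable.aemeasurable
      have hset : MeasurableSet {p : ℝ × ℝ | 0 < p.2 ∧ p.2 < hm p.1} :=
        (measurableSet_lt measurable_const measurable_snd).inter
          (measurableSet_lt measurable_snd (hm_meas.comp measurable_fst))
      exact Measurable.ite hset (hWmeas.comp measurable_fst) measurable_const
    rw [lintegral_lintegral_swap hgmeas]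
    refine lintegral_congr fun t => ?_
    by_cases ht : 0 < t ∧ (S t).Nonempty
    · have hbd : BddBelow (S t) := ⟨0, fun x hx => hx.1.le⟩
      have hA0 : 0 ≤ A t := le_csInf ht.2 fun x hx => hx.1.le
      have hsub1 : Set.Ioi (A t) ⊆ S t := by
        intro x hx
        obtain ⟨y, hyS, hyx⟩ := exists_lt_of_csInf_lt ht.2 hx
        exact ⟨lt_trans hyS.1 hyx, lt_of_lt_of_le hyS.2 (hm_mono hyx.le)⟩
      have hsub2 : S t ⊆ Set.Ici (A t) := fun x hx => csInf_le hbd hx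
      have hmt : MeasurableSet {x : ℝ | t < hm x} := measurableSet_lt measurable_const hm_meas
      have hSt : ∫⁻ x in Set.Ioi 0, g x t = ∫⁻ x in Set.Ioi (A t), W x := by
        calc ∫⁻ x in Set.Ioi 0, g x t
            = ∫⁻ x in Set.Ioi 0, ({x : ℝ | t < hm x}).indicator W x := by
              refine lintegral_congr fun x => ?_
              by_cases hx : t < hm x
              · rw [Set.indicator_of_mem (show x ∈ {x : ℝ | t < hm x} from hx)]
                simp [hg, hx, ht.1]
              · rw [Set.indicator_of_notMem (show x ∉ {x : ℝ | t < hm x} from hx)]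
                simp [hg, hx]
          _ = ∫⁻ x in {x : ℝ | t < hm x} ∩ Set.Ioi 0, W x := by
              rw [lintegral_indicator hmt, Measure.restrict_restrict hmt]
          _ = ∫⁻ x in S t, W x := by
              rw [show {x : ℝ | t < hm x} ∩ Set.Ioi 0 = S t by
                ext x; simp [hS, Set.mem_setOf_eq, and_comm]]
          _ = ∫⁻ x in Set.Ioi (A t), W x := by
              by_cases hAt : A t ∈ S t
              · have hSeq : S t = Set.Ici (A t) := by
                  refine Set.Subset.antisymm hsub2 fun x hx => ?_
                  rcases eq_or_lt_of_le hx.out with rfl | hx'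
                  · exact hAt
                  · exact hsub1 hx'
                rw [hSeq, ← setLIntegral_congr (Ioi_ae_eq_Ici (a := A t))]
              · have hSeq : S t = Set.Ioi (A t) := by
                  refine Set.Subset.antisymm ?_ hsub1
                  intro x hx
                  rcases eq_or_lt_of_le (hsub2 hx).out with rfl | hx'
                  · exact absurd hx hAt
                  · exact hx'
                rw [hSeq]
      rw [hSt]
      simp only [hinr]
      rw [if_pos ht]
      exact key hfm hfnn hfloc hfdiv hA0
    · simp only [hinr, if_neg ht]
      push_neg at ht
      have hz : ∀ x, x ∈ Set.Ioi 0 → g x t = 0 := by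
        intro x hx
        simp only [hg]
        by_cases hc : 0 < t ∧ t < hm x
        · have hxS : x ∈ S t := ⟨hx.out, hc.2⟩
          rw [ht hc.1] at hxS
          exact absurd hxS (Set.notMem_empty x)
        · simp [hc]
      rw [setLIntegral_congr_fun measurableSet_Ioi hz, lintegral_zero]
  -- pointwise comparison of layers
  have hF_le : ∀ a : ℝ, 0 ≤ a → Fi f₁ a ≤ Fi f₂ a := by
    intro a ha
    rcases eq_or_lt_of_le ha with rfl | ha'
    · rw [Fi_zero, Fi_zero]
    · exact (hlt a ha').le
  have hinr_le : ∀ t, inr f₂ t ≤ inr f₁ t := by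
    intro t
    simp only [hinr]
    by_cases ht : 0 < t ∧ (S t).Nonempty
    · simp only [if_pos ht]
      have hA0 : 0 ≤ A t := le_csInf ht.2 fun x hx => hx.1.le
      exact ENNReal.ofReal_le_ofReal
        (Real.exp_le_exp.2 (neg_le_neg (hF_le (A t) hA0)))
    · simp only [if_neg ht]; exact le_refl _
  -- strict gap on (hm 1, hm 2)
  have ht12 : hm 1 < hm 2 := by
    rw [hm_eq 1 one_pos, hm_eq 2 two_pos]
    exact hh_mono (Set.mem_Ioi.2 one_pos) (Set.mem_Ioi.2 two_pos) one_lt_two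
  have hcontδ : ContinuousOn (fun c => Real.exp (-Fi f₁ c) - Real.exp (-Fi f₂ c))
      (Set.Icc 1 2) := by
    have hsub : Set.Icc (1:ℝ) 2 ⊆ Set.Ici 0 := fun x hx => le_trans zero_le_one hx.1
    have h1 := (Fi_contOn hf₁_loc).mono hsub
    have h2 := (Fi_contOn hf₂_loc).mono hsub
    exact (Real.continuous_exp.comp_continuousOn h1.neg).sub
      (Real.continuous_exp.comp_continuousOn h2.neg)
  obtain ⟨c₀, hc₀, hmin⟩ := (isCompact_Icc (a := (1:ℝ)) (b := 2)).exists_isMinOn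
    ⟨1, Set.left_mem_Icc.2 one_le_two⟩ hcontδ
  set δ : ℝ := Real.exp (-Fi f₁ c₀) - Real.exp (-Fi f₂ c₀) with hδ
  have hδpos : 0 < δ := by
    have h1 : Fi f₁ c₀ < Fi f₂ c₀ := hlt c₀ (lt_of_lt_of_le one_pos hc₀.1)
    have h2 := Real.exp_lt_exp.2 (neg_lt_neg h1)
    rw [hδ]; linarith
  have hstrict : ∀ t ∈ Set.Ioo (hm 1) (hm 2), inr f₂ t + ENNReal.ofReal δ ≤ inr f₁ t := by
    intro t ht
    have hSne : (S t).Nonempty := ⟨2, two_pos, ht.2⟩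
    have h0t : 0 < t := lt_trans (hm_pos 1 one_pos) ht.1
    have hcond : 0 < t ∧ (S t).Nonempty := ⟨h0t, hSne⟩
    have hbd : BddBelow (S t) := ⟨0, fun x hx => hx.1.le⟩
    have hA1 : 1 ≤ A t := by
      refine le_csInf hSne fun x hx => ?_
      by_contra hx1
      push_neg at hx1
      have h3 : t < hm 1 := lt_of_lt_of_le hx.2 (hm_mono hx1.le)
      exact lt_asymm ht.1 h3
    have hA2 : A t ≤ 2 := csInf_le hbd ⟨two_pos, ht.2⟩
    have hδle : δ ≤ Real.exp (-Fi f₁ (A t)) - Real.exp (-Fi f₂ (A t)) := hmin ⟨hA1, hA2⟩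
    simp only [hinr, if_pos hcond]
    rw [← ENNReal.ofReal_add (Real.exp_pos _).le hδpos.le]
    exact ENNReal.ofReal_le_ofReal (by linarith)
  -- conclude
  have hmain : J f₂ < J f₁ := by
    rw [hlayer f₁ hf₁_meas hf₁_nonneg hf₁_loc hf₁_div,
      hlayer f₂ hf₂_meas hf₂_nonneg hf₂_loc hf₂_div]
    have hsplit : ∀ u : ℝ → ℝ≥0∞, (∫⁻ t, u t)
        = (∫⁻ t in Set.Ioo (hm 1) (hm 2), u t) + ∫⁻ t in (Set.Ioo (hm 1) (hm 2))ᶜ, u t :=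
      fun u => (lintegral_add_compl u (measurableSet_Ioo (a := hm 1) (b := hm 2))).symm
    rw [hsplit (inr f₁), hsplit (inr f₂)]
    have h1 : (∫⁻ t in Set.Ioo (hm 1) (hm 2), inr f₂ t)
        + ENNReal.ofReal δ * volume (Set.Ioo (hm 1) (hm 2))
        ≤ ∫⁻ t in Set.Ioo (hm 1) (hm 2), inr f₁ t := by
      have h2 := setLIntegral_mono' (μ := volume) measurableSet_Ioo hstrict
      rwa [lintegral_add_right _ measurable_const, setLIntegral_const] at h2
    have h2 : ∫⁻ t in (Set.Ioo (hm 1) (hm 2))ᶜ, inr f₂ t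
        ≤ ∫⁻ t in (Set.Ioo (hm 1) (hm 2))ᶜ, inr f₁ t :=
      lintegral_mono fun t => hinr_le t
    have hpos : ENNReal.ofReal δ * volume (Set.Ioo (hm 1) (hm 2)) ≠ 0 := by
      rw [Real.volume_Ioo]
      exact mul_ne_zero (ENNReal.ofReal_pos.2 hδpos).ne'
        (ENNReal.ofReal_pos.2 (by linarith)).ne'
    have hne_top : (∫⁻ t in Set.Ioo (hm 1) (hm 2), inr f₂ t)
        + ∫⁻ t in (Set.Ioo (hm 1) (hm 2))ᶜ, inr f₂ t ≠ ⊤ := by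
      rw [← hsplit (inr f₂), ← hlayer f₂ hf₂_meas hf₂_nonneg hf₂_loc hf₂_div]
      exact hfin₂
    calc (∫⁻ t in Set.Ioo (hm 1) (hm 2), inr f₂ t)
          + ∫⁻ t in (Set.Ioo (hm 1) (hm 2))ᶜ, inr f₂ t
        < ((∫⁻ t in Set.Ioo (hm 1) (hm 2), inr f₂ t)
          + ∫⁻ t in (Set.Ioo (hm 1) (hm 2))ᶜ, inr f₂ t)
          + ENNReal.ofReal δ * volume (Set.Ioo (hm 1) (hm 2)) :=
          ENNReal.lt_add_right hne_top hpos
      _ = ((∫⁻ t in Set.Ioo (hm 1) (hm 2), inr f₂ t)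
          + ENNReal.ofReal δ * volume (Set.Ioo (hm 1) (hm 2)))
          + ∫⁻ t in (Set.Ioo (hm 1) (hm 2))ᶜ, inr f₂ t := by ring
      _ ≤ (∫⁻ t in Set.Ioo (hm 1) (hm 2), inr f₁ t)
          + ∫⁻ t in (Set.Ioo (hm 1) (hm 2))ᶜ, inr f₁ t := add_le_add h1 h2
  exact (ENNReal.toReal_lt_toReal hfin₂ hfin₁).2 hmain
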